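/- Let l ≥ 2 be an integer and ε ∈ (0, 1). Then the supremum of the set { F(x, y, a_l) − F(x, y, a_l⁻¹) : x ∈ (0, ∞), y ∈ (−1, cos(πε)) } equals K_ε(l). -/

import Mathlib

open Real

/-- `F(x, y, t) = arccos((x·y − t)/√(t² + x² − 2·t·x·y))`. -/
noncomputable def F (x y t : ℝ) : ℝ :=
  Real.arccos ((x * y - t) / Real.sqrt (t ^ 2 + x ^ 2 - 2 * t * x * y))

/-- `a_l = (l + √(l² − 4))/2`. -/
noncomputable def al (l : ℝ) : ℝ := (l + Real.sqrt (l ^ 2 - 4)) / 2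

/-- `K_ε(l)`, the ε-norm of the derived category of the `l`-Kronecker quiver. -/
noncomputable def Keps (ε l : ℝ) : ℝ :=
  Real.arccos ((Real.cos (π * ε) - al l) /
      Real.sqrt ((al l) ^ 2 + 1 - 2 * al l * Real.cos (π * ε))) -
    Real.arccos ((al l * Real.cos (π * ε) - 1) /
      Real.sqrt ((al l) ^ 2 + 1 - 2 * al l * Real.cos (π * ε)))

private lemma quad_pos {t x y : ℝ} (ht : 0 < t) (hx : 0 < x) (hy : y ^ 2 < 1) :
    0 < t ^ 2 + x ^ 2 - 2 * t * x * y := by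
  nlinarith [sq_nonneg (x - t * y), mul_pos (mul_pos ht ht) (sub_pos.2 hy)]

set_option maxHeartbeats 1000000 in
private lemma Fdiff_eq {a b x y : ℝ} (hb : 0 < b) (hba : b ≤ a) (h1 : a * b = 1)
    (hx : 0 < x) (hy1 : -1 < y) (hy2 : y < 1) :
    F x y a - F x y b =
      arccos ((x ^ 2 + 1 - (a + b) * x * y) /
        (Real.sqrt (a ^ 2 + x ^ 2 - 2 * a * x * y) *
          Real.sqrt (b ^ 2 + x ^ 2 - 2 * b * x * y))) := by
  have ha : 0 < a := lt_of_lt_of_le hb hba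
  have hy2' : y ^ 2 < 1 := by nlinarith
  have hPa : 0 < a ^ 2 + x ^ 2 - 2 * a * x * y := quad_pos ha hx hy2'
  have hPb : 0 < b ^ 2 + x ^ 2 - 2 * b * x * y := quad_pos hb hx hy2'
  set ra := Real.sqrt (a ^ 2 + x ^ 2 - 2 * a * x * y) with hra
  set rb := Real.sqrt (b ^ 2 + x ^ 2 - 2 * b * x * y) with hrb
  have hra0 : 0 < ra := Real.sqrt_pos.2 hPa
  have hrb0 : 0 < rb := Real.sqrt_pos.2 hPb
  have hra2 : ra ^ 2 = a ^ 2 + x ^ 2 - 2 * a * x * y := Real.sq_sqrt hPa.le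
  have hrb2 : rb ^ 2 = b ^ 2 + x ^ 2 - 2 * b * x * y := Real.sq_sqrt hPb.le
  have hxy : 0 < x ^ 2 * (1 - y ^ 2) := mul_pos (pow_pos hx 2) (by linarith)
  have hua : (x * y - a) ^ 2 < ra ^ 2 := by rw [hra2]; nlinarith
  have hub : (x * y - b) ^ 2 < rb ^ 2 := by rw [hrb2]; nlinarith
  have hua1 : -1 < (x * y - a) / ra := by
    rw [lt_div_iff₀ hra0]; nlinarith
  have hua2 : (x * y - a) / ra < 1 := by
    rw [div_lt_one hra0]; nlinarith
  have hub1 : -1 < (x * y - b) / rb := by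
    rw [lt_div_iff₀ hrb0]; nlinarith
  have hub2 : (x * y - b) / rb < 1 := by
    rw [div_lt_one hrb0]; nlinarith
  have hFa : F x y a = Real.arccos ((x * y - a) / ra) := by unfold F; rw [hra]
  have hFb : F x y b = Real.arccos ((x * y - b) / rb) := by unfold F; rw [hrb]
  set A := Real.arccos ((x * y - a) / ra) with hA
  set B := Real.arccos ((x * y - b) / rb) with hB
  have hcosA : Real.cos A = (x * y - a) / ra := Real.cos_arccos hua1.le hua2.le
  have hcosB : Real.cos B = (x * y - b) / rb := Real.cos_arccos hub1.le hub2.le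
  have h1y : (0:ℝ) ≤ 1 - y ^ 2 := by nlinarith
  have hs2 : Real.sqrt (1 - y ^ 2) ^ 2 = 1 - y ^ 2 := Real.sq_sqrt h1y
  have hsinA : Real.sin A = x * Real.sqrt (1 - y ^ 2) / ra := by
    rw [hA, Real.sin_arccos]
    have e : 1 - ((x * y - a) / ra) ^ 2 = (x * Real.sqrt (1 - y ^ 2) / ra) ^ 2 := by
      rw [div_pow, div_pow, mul_pow, hs2, hra2]
      rw [eq_div_iff hPa.ne', sub_mul, div_mul_cancel₀ _ hPa.ne']
      ring
    rw [e, Real.sqrt_sq (by positivity)]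
  have hsinB : Real.sin B = x * Real.sqrt (1 - y ^ 2) / rb := by
    rw [hB, Real.sin_arccos]
    have e : 1 - ((x * y - b) / rb) ^ 2 = (x * Real.sqrt (1 - y ^ 2) / rb) ^ 2 := by
      rw [div_pow, div_pow, mul_pow, hs2, hrb2]
      rw [eq_div_iff hPb.ne', sub_mul, div_mul_cancel₀ _ hPb.ne']
      ring
    rw [e, Real.sqrt_sq (by positivity)]
  have hA0 : 0 ≤ A := Real.arccos_nonneg _
  have hApi : A ≤ π := Real.arccos_le_pi _
  have hB0 : 0 ≤ B := Real.arccos_nonneg _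
  have hBpi : B < π :=
    lt_of_le_of_ne (Real.arccos_le_pi _) (fun h => absurd (Real.arccos_eq_pi.mp h) (by linarith))
  have hsinAB : 0 ≤ Real.sin (A - B) := by
    rw [Real.sin_sub, hsinA, hsinB, hcosA, hcosB]
    have e : x * Real.sqrt (1 - y ^ 2) / ra * ((x * y - b) / rb) -
        (x * y - a) / ra * (x * Real.sqrt (1 - y ^ 2) / rb) =
        x * Real.sqrt (1 - y ^ 2) * (a - b) / (ra * rb) := by
      field_simp
      ring
    rw [e]
    apply div_nonneg _ (mul_nonneg hra0.le hrb0.le)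
    exact mul_nonneg (mul_nonneg hx.le (Real.sqrt_nonneg _)) (sub_nonneg.2 hba)
  have hAB0 : 0 ≤ A - B := by
    by_contra h
    push_neg at h
    have h2 : A - B < 0 := by linarith
    have h3 : -π < A - B := by linarith
    have := Real.sin_neg_of_neg_of_neg_pi_lt h2 h3
    linarith
  have hABpi : A - B ≤ π := by linarith
  have hcossub : Real.cos (A - B) =
      (x ^ 2 + 1 - (a + b) * x * y) / (ra * rb) := by
    rw [Real.cos_sub, hsinA, hsinB, hcosA, hcosB]
    rw [div_mul_div_comm, div_mul_div_comm, ← add_div]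
    congr 1
    have hss : Real.sqrt (1 - y ^ 2) * Real.sqrt (1 - y ^ 2) = 1 - y ^ 2 :=
      Real.mul_self_sqrt h1y
    linear_combination h1 + x ^ 2 * hss
  rw [hFa, hFb, ← hcossub, Real.arccos_cos hAB0 hABpi]

private lemma sqrt_prod {a b x y : ℝ} (ha : 0 < a) (hb : 0 < b) (h1 : a * b = 1)
    (hx : 0 < x) (hy : y ^ 2 < 1) :
    Real.sqrt (a ^ 2 + x ^ 2 - 2 * a * x * y) * Real.sqrt (b ^ 2 + x ^ 2 - 2 * b * x * y) =
      Real.sqrt ((x ^ 2 + 1 - (a + b) * x * y) ^ 2 +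
        (x * (a - b) * Real.sqrt (1 - y ^ 2)) ^ 2) := by
  rw [← Real.sqrt_mul (quad_pos ha hx hy).le]
  congr 1
  have hs2 : Real.sqrt (1 - y ^ 2) ^ 2 = 1 - y ^ 2 := Real.sq_sqrt (by linarith)
  rw [mul_pow, mul_pow, hs2]
  have hbe : b = a⁻¹ := eq_inv_of_mul_eq_one_left (by linarith [h1] : b * a = 1)
  subst hbe
  field_simp
  ring

private lemma arccos_div_sqrt (N m : ℝ) (hm : 0 < m) :
    arccos (N / Real.sqrt (N ^ 2 + m ^ 2)) = π / 2 - arctan (N / m) := by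
  have hNm : (0:ℝ) < N ^ 2 + m ^ 2 := by positivity
  have h1 : N / Real.sqrt (N ^ 2 + m ^ 2) = Real.cos (π / 2 - arctan (N / m)) := by
    rw [Real.cos_pi_div_two_sub, Real.sin_arctan]
    have e : 1 + (N / m) ^ 2 = (N ^ 2 + m ^ 2) / m ^ 2 := by field_simp; ring
    rw [e, Real.sqrt_div hNm.le, Real.sqrt_sq hm.le]
    have hs : Real.sqrt (N ^ 2 + m ^ 2) ≠ 0 := (Real.sqrt_pos.2 hNm).ne'
    field_simp
  rw [h1]
  apply Real.arccos_cos
  · have := Real.arctan_lt_pi_div_two (N / m)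
    linarith
  · have := Real.neg_pi_div_two_lt_arctan (N / m)
    linarith [Real.pi_pos]

private lemma cot_step {L y c : ℝ} (hL : 2 ≤ L) (hy1 : -1 < y) (hyc : y ≤ c) (hc : c < 1) :
    (2 - L * c) * Real.sqrt (1 - y ^ 2) ≤ (2 - L * y) * Real.sqrt (1 - c ^ 2) := by
  have hy2 : y < 1 := lt_of_le_of_lt hyc hc
  have hc1 : -1 < c := lt_of_lt_of_le hy1 hyc
  have hy2' : (0:ℝ) < 1 - y ^ 2 := by nlinarith
  have hc2' : (0:ℝ) < 1 - c ^ 2 := by nlinarith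
  have hsy : 0 < Real.sqrt (1 - y ^ 2) := Real.sqrt_pos.2 hy2'
  have hsc : 0 < Real.sqrt (1 - c ^ 2) := Real.sqrt_pos.2 hc2'
  have hsy2 : Real.sqrt (1 - y ^ 2) ^ 2 = 1 - y ^ 2 := Real.sq_sqrt hy2'.le
  have hsc2 : Real.sqrt (1 - c ^ 2) ^ 2 = 1 - c ^ 2 := Real.sq_sqrt hc2'.le
  rcases le_or_gt (2 - L * c) 0 with h | h
  · rcases le_or_gt 0 (2 - L * y) with h2 | h2
    · calc (2 - L * c) * Real.sqrt (1 - y ^ 2) ≤ 0 := mul_nonpos_of_nonpos_of_nonneg h hsy.le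
        _ ≤ (2 - L * y) * Real.sqrt (1 - c ^ 2) := mul_nonneg h2 hsc.le
    · have hy0 : 0 < y := by nlinarith
      have hsysc : Real.sqrt (1 - c ^ 2) ≤ Real.sqrt (1 - y ^ 2) :=
        Real.sqrt_le_sqrt (by nlinarith)
      calc (2 - L * c) * Real.sqrt (1 - y ^ 2) ≤ (2 - L * y) * Real.sqrt (1 - y ^ 2) := by
            apply mul_le_mul_of_nonneg_right _ hsy.le
            nlinarith
        _ ≤ (2 - L * y) * Real.sqrt (1 - c ^ 2) :=
            mul_le_mul_of_nonpos_left hsysc h2.le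
  · have h2 : 0 < 2 - L * y := by nlinarith
    apply le_of_pow_le_pow_left₀ two_ne_zero (mul_nonneg h2.le hsc.le)
    have e1 : 0 ≤ (c - y) * ((c - y) * (4 + L ^ 2 - 4 * L * c) + 2 * (2 - L * c) * (L - 2 * c)) := by
      apply mul_nonneg (by linarith)
      apply add_nonneg
      · apply mul_nonneg (by linarith)
        nlinarith [sq_nonneg (L - 2)]
      · apply mul_nonneg (mul_nonneg (by norm_num) h.le)
        linarith
    have e2 : (2 - L * y) ^ 2 * (1 - c ^ 2) - (2 - L * c) ^ 2 * (1 - y ^ 2) =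
        (c - y) * ((c - y) * (4 + L ^ 2 - 4 * L * c) + 2 * (2 - L * c) * (L - 2 * c)) := by ring
    rw [mul_pow, mul_pow, hsy2, hsc2]
    linarith

private lemma main_le {a b x y c : ℝ} (hb : 0 < b) (hba : b ≤ a) (h1 : a * b = 1)
    (hL : 2 ≤ a + b) (hx : 0 < x) (hy1 : -1 < y) (hyc : y ≤ c) (hc1 : -1 < c) (hc : c < 1) :
    F x y a - F x y b ≤ F 1 c a - F 1 c b := by
  have ha : 0 < a := lt_of_lt_of_le hb hba
  have hy2 : y < 1 := lt_of_le_of_lt hyc hc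
  have hy2' : y ^ 2 < 1 := by nlinarith
  have hc2' : c ^ 2 < 1 := by nlinarith
  rcases eq_or_lt_of_le hba with hab | hab
  · rw [hab]
    simp
  · have hd : 0 < a - b := sub_pos.2 hab
    have hsy : 0 < Real.sqrt (1 - y ^ 2) := Real.sqrt_pos.2 (by nlinarith)
    have hsc : 0 < Real.sqrt (1 - c ^ 2) := Real.sqrt_pos.2 (by nlinarith)
    have hmx : 0 < x * (a - b) * Real.sqrt (1 - y ^ 2) := by positivity
    have hmc : 0 < 1 * (a - b) * Real.sqrt (1 - c ^ 2) := by positivity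
    rw [Fdiff_eq hb hba h1 hx hy1 hy2, Fdiff_eq hb hba h1 one_pos hc1 hc,
      sqrt_prod ha hb h1 hx hy2', sqrt_prod ha hb h1 one_pos hc2',
      arccos_div_sqrt _ _ hmx, arccos_div_sqrt _ _ hmc]
    have harg : (1 ^ 2 + 1 - (a + b) * 1 * c) / (1 * (a - b) * Real.sqrt (1 - c ^ 2)) ≤
        (x ^ 2 + 1 - (a + b) * x * y) / (x * (a - b) * Real.sqrt (1 - y ^ 2)) := by
      rw [div_le_div_iff₀ hmc hmx]
      have hcot : (2 - (a + b) * c) * Real.sqrt (1 - y ^ 2) ≤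
          (2 - (a + b) * y) * Real.sqrt (1 - c ^ 2) := cot_step hL hy1 hyc hc
      have hN : (2 - (a + b) * y) * x ≤ x ^ 2 + 1 - (a + b) * x * y := by
        nlinarith [sq_nonneg (x - 1)]
      nlinarith [mul_le_mul_of_nonneg_left hcot (mul_nonneg hx.le hd.le),
        mul_le_mul_of_nonneg_right hN (mul_nonneg hd.le hsc.le)]
    have := Real.arctan_strictMono.monotone harg
    linarith

/-- For an integer `l ≥ 2` and `ε ∈ (0, 1)`, the supremum of
`{F(x, y, a_l) − F(x, y, a_l⁻¹) : x ∈ (0, ∞), y ∈ (−1, cos(πε))}` equals `K_ε(l)`. -/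
theorem stmt_14 (l : ℤ) (hl : 2 ≤ l) (ε : ℝ) (hε : ε ∈ Set.Ioo (0 : ℝ) 1) :
    IsLUB {v : ℝ | ∃ x : ℝ, 0 < x ∧ ∃ y ∈ Set.Ioo (-1 : ℝ) (Real.cos (π * ε)),
      v = F x y (al (l : ℝ)) - F x y (al (l : ℝ))⁻¹} (Keps ε (l : ℝ)) := by
  obtain ⟨hε0, hε1⟩ := hε
  set L := (l : ℝ) with hLdef
  have hL : (2:ℝ) ≤ L := by rw [hLdef]; exact_mod_cast hl
  set c := Real.cos (π * ε) with hcdef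
  have hπε0 : 0 < π * ε := mul_pos Real.pi_pos hε0
  have hπεπ : π * ε < π := by nlinarith [Real.pi_pos]
  have hc1 : -1 < c := by
    have h := Real.strictAntiOn_cos ⟨hπε0.le, hπεπ.le⟩
      ⟨Real.pi_pos.le, le_refl π⟩ hπεπ
    rw [Real.cos_pi] at h
    exact h
  have hc2 : c < 1 := by
    have h := Real.strictAntiOn_cos ⟨le_refl (0:ℝ), Real.pi_pos.le⟩
      ⟨hπε0.le, hπεπ.le⟩ hπε0
    rw [Real.cos_zero] at h
    exact h
  have hcsq : c ^ 2 < 1 := by nlinarith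
  set a := al L with hadef
  have hd2 : (0:ℝ) ≤ L ^ 2 - 4 := by nlinarith
  have hs2 : Real.sqrt (L ^ 2 - 4) ^ 2 = L ^ 2 - 4 := Real.sq_sqrt hd2
  have hs0 : (0:ℝ) ≤ Real.sqrt (L ^ 2 - 4) := Real.sqrt_nonneg _
  have ha1 : 1 ≤ a := by rw [hadef]; unfold al; linarith
  have ha0 : 0 < a := lt_of_lt_of_le one_pos ha1
  have hainv : a * a⁻¹ = 1 := mul_inv_cancel₀ ha0.ne'
  have hbpos : 0 < a⁻¹ := inv_pos.2 ha0
  have hinv2 : a⁻¹ = (L - Real.sqrt (L ^ 2 - 4)) / 2 := by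
    have hmul : a * ((L - Real.sqrt (L ^ 2 - 4)) / 2) = 1 := by
      rw [hadef]; unfold al; linear_combination (-(1:ℝ)/4) * hs2
    exact inv_eq_of_mul_eq_one_right hmul
  have hsum : a + a⁻¹ = L := by rw [hinv2, hadef]; unfold al; ring
  have hb1 : a⁻¹ ≤ 1 := by nlinarith [mul_le_mul_of_nonneg_right ha1 hbpos.le]
  have hba : a⁻¹ ≤ a := le_trans hb1 ha1
  have hLab : (2:ℝ) ≤ a + a⁻¹ := le_of_le_of_eq hL hsum.symm
  have hP : (0:ℝ) < a ^ 2 + 1 - 2 * a * c := by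
    have := quad_pos ha0 one_pos hcsq
    nlinarith [this]
  have hsqP : 0 < Real.sqrt (a ^ 2 + 1 - 2 * a * c) := Real.sqrt_pos.2 hP

  have hKF : Keps ε L = F 1 c a - F 1 c a⁻¹ := by
    unfold Keps F
    rw [← hadef, ← hcdef]
    congr 1
    · congr 2
      · ring
      · congr 1
        ring
    · have e1 : (a⁻¹) ^ 2 + 1 ^ 2 - 2 * a⁻¹ * 1 * c = (a ^ 2 + 1 - 2 * a * c) / a ^ 2 := by
        field_simp
        ring
      rw [e1, Real.sqrt_div hP.le, Real.sqrt_sq ha0.le]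
      congr 1
      rw [div_div_eq_mul_div]
      congr 1
      field_simp
  constructor
  · rintro v ⟨x, hx, y, ⟨hy1, hy2⟩, rfl⟩
    rw [hKF]
    exact main_le hbpos hba hainv hLab hx hy1 hy2.le hc1 hc2
  · intro M hM
    rw [hKF]
    have hcont : ∀ t : ℝ, 0 < t → ContinuousAt (fun y : ℝ => F 1 y t) c := by
      intro t ht
      have hPt : (0:ℝ) < t ^ 2 + 1 ^ 2 - 2 * t * 1 * c := quad_pos ht one_pos hcsq
      unfold F
      apply ContinuousAt.comp Real.continuous_arccos.continuousAt
      apply ContinuousAt.div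
      · fun_prop
      · apply ContinuousAt.comp Real.continuous_sqrt.continuousAt
        fun_prop
      · exact (Real.sqrt_pos.2 hPt).ne'
    have htend : Filter.Tendsto (fun y : ℝ => F 1 y a - F 1 y a⁻¹)
        (nhdsWithin c (Set.Iio c)) (nhds (F 1 c a - F 1 c a⁻¹)) :=
      (((hcont a ha0).sub (hcont a⁻¹ hbpos)).tendsto).mono_left nhdsWithin_le_nhds
    apply le_of_tendsto htend
    filter_upwards [Ioo_mem_nhdsLT hc1] with y hy
    exact hM ⟨1, one_pos, y, hy, rfl⟩
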